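/- Let V be a finite-dimensional vector space over ℚ, let F : V → V be a ℚ-linear endomorphism, and let σ ∈ V ⊗_ℚ ℂ be a nonzero vector with (F ⊗ 1)(σ) = λ σ for some λ ∈ ℂ. Assume that no proper ℚ-subspace W ⊊ V satisfies both F(W) ⊆ W and σ ∈ W ⊗_ℚ ℂ. Then the characteristic polynomial of F is primary in ℚ[t], i.e. it equals f(t)^m for some monic irreducible polynomial f(t) ∈ ℚ[t] and some integer m ≥ 1. -/

import Mathlib

open TensorProduct

section Aux

variable {V : Type*} [AddCommGroup V] [Module ℚ V]

private lemma baseChange_pow (g : V →ₗ[ℚ] V) (k : ℕ) :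
    (g ^ k).baseChange ℂ = (g.baseChange ℂ) ^ k := by
  induction k with
  | zero => simpa using LinearMap.baseChange_id
  | succ k ih =>
      rw [pow_succ, pow_succ, Module.End.mul_eq_comp, Module.End.mul_eq_comp,
        LinearMap.baseChange_comp, ih]

private lemma aeval_baseChange_eigen (F : V →ₗ[ℚ] V) (σ : ℂ ⊗[ℚ] V) (lam : ℂ)
    (heig : F.baseChange ℂ σ = lam • σ) (p : Polynomial ℚ) :
    (Polynomial.aeval F p).baseChange ℂ σ
      = ((p.map (algebraMap ℚ ℂ)).eval lam) • σ := by
  have hpow : ∀ k : ℕ, ((F.baseChange ℂ) ^ k) σ = lam ^ k • σ := by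
    intro k
    induction k with
    | zero => simp
    | succ k ih =>
        rw [pow_succ, Module.End.mul_apply, heig, map_smul, ih, smul_smul, mul_comm,
          ← pow_succ]
  induction p using Polynomial.induction_on' with
  | add p q hp hq =>
      rw [map_add, LinearMap.baseChange_add, LinearMap.add_apply, hp, hq,
        Polynomial.map_add, Polynomial.eval_add, add_smul]
  | monomial k a =>
      have h1 : (Polynomial.aeval F) (Polynomial.monomial k a) = a • F ^ k := by
        rw [Polynomial.aeval_monomial, Algebra.algebraMap_eq_smul_one, smul_mul_assoc,
          one_mul]
      rw [h1, LinearMap.baseChange_smul, LinearMap.smul_apply, baseChange_pow, hpow,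
        Polynomial.map_monomial, Polynomial.eval_monomial, mul_smul, algebraMap_smul]

private lemma mem_baseChange_of_baseChange_eq_zero (g : V →ₗ[ℚ] V) (x : ℂ ⊗[ℚ] V)
    (hx : g.baseChange ℂ x = 0) : x ∈ (LinearMap.ker g).baseChange ℂ := by
  have hex := Module.Flat.lTensor_exact ℂ (LinearMap.exact_subtype_ker_map g)
  have h0 : LinearMap.lTensor ℂ g x = 0 := by
    rw [← LinearMap.baseChange_eq_ltensor]; exact hx
  obtain ⟨y, hy⟩ := (hex x).mp h0
  rw [← hy]
  clear hy hx h0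
  induction y using TensorProduct.induction_on with
  | zero => simp
  | tmul a m =>
      rw [LinearMap.lTensor_tmul]
      exact Submodule.tmul_mem_baseChange_of_mem a m.2
  | add y z hy hz => rw [map_add]; exact Submodule.add_mem _ hy hz

end Aux

/-- Let `F` be an endomorphism of a finite-dimensional `ℚ`-vector space `V`, and let
`σ ≠ 0` be an eigenvector of the complexification of `F`. If no proper `ℚ`-subspace
`W ⊊ V` is `F`-stable with `σ ∈ W ⊗ ℂ`, then the characteristic polynomial of `F`
is a power of a monic irreducible polynomial. -/
theorem charpoly_primary_of_minimality
    (V : Type*) [AddCommGroup V] [Module ℚ V] [FiniteDimensional ℚ V]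
    (F : V →ₗ[ℚ] V) (σ : ℂ ⊗[ℚ] V) (hσ : σ ≠ 0)
    (lam : ℂ) (heig : F.baseChange ℂ σ = lam • σ)
    (hmin : ∀ W : Submodule ℚ V, (∀ x ∈ W, F x ∈ W) → σ ∈ W.baseChange ℂ → W = ⊤) :
    ∃ f : Polynomial ℚ, f.Monic ∧ Irreducible f ∧ ∃ m : ℕ, 1 ≤ m ∧ F.charpoly = f ^ m := by
  classical
  have hVnt : Nontrivial V := by
    by_contra h
    rw [not_nontrivial_iff_subsingleton] at h
    exact hσ (Subsingleton.elim σ 0)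
  set n : ℕ := Module.finrank ℚ V with hn_def
  have hn : 0 < n := Module.finrank_pos
  have hmonic : F.charpoly.Monic := F.charpoly_monic
  have hne : F.charpoly ≠ 0 := hmonic.ne_zero
  -- `lam` is a root of the complexified characteristic polynomial
  have hroot : (F.charpoly.map (algebraMap ℚ ℂ)).eval lam = 0 := by
    have h0 := aeval_baseChange_eigen F σ lam heig F.charpoly
    rw [F.aeval_self_charpoly] at h0
    have : (0 : ℂ ⊗[ℚ] V) = (F.charpoly.map (algebraMap ℚ ℂ)).eval lam • σ := by
      simpa using h0
    rcases smul_eq_zero.mp this.symm with h | h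
    · exact h
    · exact absurd h hσ
  -- the evaluation ring hom `p ↦ (p.map (algebraMap ℚ ℂ)).eval lam`
  set ψ : Polynomial ℚ →+* ℂ :=
    (Polynomial.evalRingHom lam).comp (Polynomial.mapRingHom (algebraMap ℚ ℂ)) with hψ_def
  have hψ : ∀ p : Polynomial ℚ, ψ p = (p.map (algebraMap ℚ ℂ)).eval lam := fun p => rfl
  -- find an irreducible monic factor `f` of the charpoly with `f(lam) = 0` over `ℂ`
  set S := UniqueFactorizationMonoid.normalizedFactors F.charpoly with hS_def
  have hassoc : Associated S.prod F.charpoly :=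
    UniqueFactorizationMonoid.prod_normalizedFactors hne
  obtain ⟨u, hu⟩ := hassoc
  have hprod0 : ψ S.prod = 0 := by
    have h1 : ψ S.prod * ψ (u : Polynomial ℚ) = 0 := by
      rw [← map_mul, hu, hψ, hroot]
    have h2 : IsUnit (ψ (u : Polynomial ℚ)) := (u.isUnit).map ψ
    rcases mul_eq_zero.mp h1 with h | h
    · exact h
    · exact absurd h h2.ne_zero
  have hfex : ∃ f ∈ S, ψ f = 0 := by
    rw [← Multiset.prod_hom S ψ] at hprod0
    rcases Multiset.prod_eq_zero_iff.mp hprod0 with h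
    obtain ⟨f, hfS, hf0⟩ := Multiset.mem_map.mp h
    exact ⟨f, hfS, hf0⟩
  obtain ⟨f, hfS, hflam⟩ := hfex
  have hfirr : Irreducible f := UniqueFactorizationMonoid.irreducible_of_normalized_factor f hfS
  have hfmonic : f.Monic := by
    have h1 := UniqueFactorizationMonoid.normalize_normalized_factor f hfS
    rw [← h1]
    exact Polynomial.monic_normalize hfirr.ne_zero
  -- apply minimality to the kernel of `f(F)^n`
  set W : Submodule ℚ V := LinearMap.ker (Polynomial.aeval F (f ^ n)) with hW_def
  have hstable : ∀ x ∈ W, F x ∈ W := by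
    intro x hx
    have hcomm : (Polynomial.aeval F (f ^ n)) * F = F * (Polynomial.aeval F (f ^ n)) := by
      have e1 := map_mul (Polynomial.aeval F) (f ^ n) Polynomial.X
      have e2 := map_mul (Polynomial.aeval F) Polynomial.X (f ^ n)
      rw [Polynomial.aeval_X] at e1 e2
      rw [← e1, ← e2, mul_comm]
    have : (Polynomial.aeval F (f ^ n)) (F x) = F ((Polynomial.aeval F (f ^ n)) x) := by
      have := congrArg (fun g : Module.End ℚ V => g x) hcomm
      simpa using this
    rw [LinearMap.mem_ker] at hx ⊢
    rw [this, hx, map_zero]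
  have hmem : σ ∈ W.baseChange ℂ := by
    apply mem_baseChange_of_baseChange_eq_zero
    rw [aeval_baseChange_eigen F σ lam heig, Polynomial.map_pow, Polynomial.eval_pow,
      ← hψ, hflam, zero_pow hn.ne', zero_smul]
  have htop : Polynomial.aeval F (f ^ n) = 0 := LinearMap.ker_eq_top.mp (hmin W hstable hmem)
  -- move to matrices over ℂ
  set ι := Module.Free.ChooseBasisIndex ℚ V with hι_def
  set b : Module.Basis ι ℚ V := Module.Free.chooseBasis ℚ V with hb_def
  set M₀ : Matrix ι ι ℚ := LinearMap.toMatrix b b F with hM₀_def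
  set M : Matrix ι ι ℂ := M₀.map (algebraMap ℚ ℂ) with hM_def
  have hM₀0 : Polynomial.aeval M₀ (f ^ n) = 0 := by
    have h1 : M₀ = LinearMap.toMatrixAlgEquiv b F := rfl
    rw [h1, Polynomial.aeval_algHom_apply (LinearMap.toMatrixAlgEquiv b) F (f ^ n), htop,
      map_zero]
  have hM0 : Polynomial.aeval M ((f ^ n).map (algebraMap ℚ ℂ)) = 0 := by
    rw [Polynomial.aeval_map_algebraMap]
    have h1 : M = (Algebra.ofId ℚ ℂ).mapMatrix M₀ := by
      rw [AlgHom.mapMatrix_apply, hM_def]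
      rfl
    rw [h1, Polynomial.aeval_algHom_apply ((Algebra.ofId ℚ ℂ).mapMatrix) M₀ (f ^ n), hM₀0,
      map_zero]
  have hcp : M.charpoly = F.charpoly.map (algebraMap ℚ ℂ) := by
    rw [hM_def, ← RingHom.coe_coe (algebraMap ℚ ℂ), Matrix.charpoly_map]
    rw [hM₀_def, LinearMap.charpoly_toMatrix]
    rfl
  -- key claim: every monic irreducible factor of the charpoly is `f`
  have hkey : ∀ q : Polynomial ℚ, q.Monic → Irreducible q → q ∣ F.charpoly → q = f := by
    intro q hqm hqi hqd
    have hdeg : 0 < (q.map (algebraMap ℚ ℂ)).degree := by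
      rw [Polynomial.degree_map]
      exact Polynomial.degree_pos_of_irreducible hqi
    obtain ⟨μ, hμ⟩ := Complex.exists_root hdeg
    have hμcp : M.charpoly.eval μ = 0 := by
      obtain ⟨c, hc⟩ := Polynomial.map_dvd (algebraMap ℚ ℂ) hqd
      rw [hcp, hc, Polynomial.eval_mul, hμ, zero_mul]
    have hdet : ((Matrix.scalar ι) μ - M).det = 0 := by
      have h1 := _root_.eval_det M.charmatrix μ
      rw [← Matrix.charpoly, Matrix.matPolyEquiv_charmatrix, Polynomial.eval_sub,
        Polynomial.eval_X, Polynomial.eval_C] at h1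
      rw [← h1, hμcp]
    obtain ⟨v, hv0, hv⟩ := Matrix.exists_mulVec_eq_zero_iff.mpr hdet
    have hEv : M.mulVec v = μ • v := by
      rw [Matrix.sub_mulVec] at hv
      have h2 : (Matrix.scalar ι μ).mulVec v = μ • v := by
        ext i
        simp [Matrix.scalar, Matrix.mulVec_diagonal]
      rw [h2] at hv
      exact (sub_eq_zero.mp hv).symm
    have hE : Module.End.HasEigenvector (Matrix.toLin' M) μ v :=
      ⟨Module.End.mem_eigenspace_iff.mpr (by rw [Matrix.toLin'_apply, hEv]), hv0⟩
    have hEa : Polynomial.aeval (Matrix.toLin' M) ((f ^ n).map (algebraMap ℚ ℂ)) = 0 := by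
      have h1 : (Matrix.toLin' M) = Matrix.toLinAlgEquiv' M := rfl
      rw [h1, Polynomial.aeval_algHom_apply Matrix.toLinAlgEquiv' M
        ((f ^ n).map (algebraMap ℚ ℂ)), hM0, map_zero]
    have h3 := Module.End.aeval_apply_of_hasEigenvector (p := (f ^ n).map (algebraMap ℚ ℂ)) hE
    rw [hEa] at h3
    have h4 : ((f ^ n).map (algebraMap ℚ ℂ)).eval μ = 0 := by
      rcases smul_eq_zero.mp h3.symm with h | h
      · exact h
      · exact absurd h hv0
    have hfμ : (f.map (algebraMap ℚ ℂ)).eval μ = 0 := by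
      rw [Polynomial.map_pow, Polynomial.eval_pow] at h4
      exact pow_eq_zero_iff hn.ne' |>.mp h4
    by_contra hqf
    have hnd : ¬ q ∣ f := by
      intro hdvd
      exact hqf (Polynomial.eq_of_monic_of_associated hqm hfmonic
        (hqi.associated_of_dvd hfirr hdvd))
    have hco : IsCoprime q f := hqi.coprime_iff_not_dvd.mpr hnd
    have hco2 := hco.map
      ((Polynomial.evalRingHom μ).comp (Polynomial.mapRingHom (algebraMap ℚ ℂ)))
    have e1 : ((Polynomial.evalRingHom μ).comp (Polynomial.mapRingHom (algebraMap ℚ ℂ))) q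
        = (q.map (algebraMap ℚ ℂ)).eval μ := rfl
    have e2 : ((Polynomial.evalRingHom μ).comp (Polynomial.mapRingHom (algebraMap ℚ ℂ))) f
        = (f.map (algebraMap ℚ ℂ)).eval μ := rfl
    rw [e1, e2, hμ, hfμ] at hco2
    exact not_isUnit_zero (isCoprime_zero_left.mp hco2)
  -- conclude: the charpoly is `f ^ m`
  have hall : ∀ q ∈ S, q = f := by
    intro q hqS
    have hqirr := UniqueFactorizationMonoid.irreducible_of_normalized_factor q hqS
    have hqmonic : q.Monic := by
      have h1 := UniqueFactorizationMonoid.normalize_normalized_factor q hqS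
      rw [← h1]
      exact Polynomial.monic_normalize hqirr.ne_zero
    exact hkey q hqmonic hqirr
      (UniqueFactorizationMonoid.dvd_of_mem_normalizedFactors hqS)
  set m := Multiset.card S with hm_def
  have hSrep : S = Multiset.replicate m f := Multiset.eq_replicate.mpr ⟨rfl, hall⟩
  have hprodf : S.prod = f ^ m := by rw [hSrep, Multiset.prod_replicate]
  have heq : F.charpoly = f ^ m :=
    (Polynomial.eq_of_monic_of_associated (hfmonic.pow m) hmonic (hprodf ▸ ⟨u, hu⟩)).symm
  have hm1 : 1 ≤ m := by
    by_contra h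
    push_neg at h
    interval_cases m
    rw [pow_zero] at heq
    have := F.charpoly_natDegree
    rw [heq, Polynomial.natDegree_one] at this
    omega
  exact ⟨f, hfmonic, hfirr, m, hm1, heq⟩
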